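/- In the sedenion algebra 𝕊, with α = e₁ + e₁₀ and β = e₇ + e₁₂, the polynomial f(x) = β x² + β x decomposes as f(x) = (β x + β)(x − α), yet f(α) = −2β ≠ 0, so α is not a root of f. Hence a right factor x − λ does not imply λ is a root over 𝕊. -/

import Mathlib

/-- Cayley–Dickson double (with γ = -1) of an algebra with involution. -/
def CD (A : Type*) : Type _ := A × A

namespace CD

variable {A : Type*}

instance [AddCommGroup A] : AddCommGroup (CD A) := inferInstanceAs (AddCommGroup (A × A))
noncomputable instance [AddCommGroup A] [Module ℝ A] : Module ℝ (CD A) :=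
  inferInstanceAs (Module ℝ (A × A))

/-- Build an element of the double from its two halves. -/
def mk (a b : A) : CD A := (a, b)

section
set_option linter.unusedSectionVars false

/-- A star operation fixing `1`. -/
class StarOne (A : Type*) [One A] [Star A] : Prop where
  star_one : star (1 : A) = 1

variable [NonAssocRing A] [StarAddMonoid A] [StarOne A]

instance : One (CD A) := ⟨((1 : A), 0)⟩
instance : Mul (CD A) :=
  ⟨fun x y => (x.1 * y.1 - star y.2 * x.2, y.2 * x.1 + x.2 * star y.1)⟩
instance : Star (CD A) := ⟨fun x => (star x.1, -x.2)⟩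

lemma mul_def (x y : CD A) :
    x * y = (x.1 * y.1 - star y.2 * x.2, y.2 * x.1 + x.2 * star y.1) := rfl
lemma one_def : (1 : CD A) = ((1 : A), 0) := rfl
lemma star_def (x : CD A) : star x = (star x.1, -x.2) := rfl
lemma add_def (x y : CD A) : x + y = (x.1 + y.1, x.2 + y.2) := rfl
lemma zero_def : (0 : CD A) = ((0 : A), 0) := rfl

instance instNonAssocRing : NonAssocRing (CD A) where
  __ := (inferInstanceAs (AddCommGroup (A × A)) : AddCommGroup (CD A))
  left_distrib a b c := by
    show ((a.1 * (b.1 + c.1) - star (b.2 + c.2) * a.2,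
      (b.2 + c.2) * a.1 + a.2 * star (b.1 + c.1)) : A × A) =
      ((a.1 * b.1 - star b.2 * a.2) + (a.1 * c.1 - star c.2 * a.2),
      (b.2 * a.1 + a.2 * star b.1) + (c.2 * a.1 + a.2 * star c.1))
    refine Prod.ext ?_ ?_ <;>
      simp [mul_add, add_mul, star_add] <;> abel
  right_distrib a b c := by
    show (((a.1 + b.1) * c.1 - star c.2 * (a.2 + b.2),
      c.2 * (a.1 + b.1) + (a.2 + b.2) * star c.1) : A × A) =
      ((a.1 * c.1 - star c.2 * a.2) + (b.1 * c.1 - star c.2 * b.2),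
      (c.2 * a.1 + a.2 * star c.1) + (c.2 * b.1 + b.2 * star c.1))
    refine Prod.ext ?_ ?_ <;>
      simp [mul_add, add_mul, star_add] <;> abel
  zero_mul a := by
    show (((0 : A) * a.1 - star a.2 * 0, a.2 * 0 + 0 * star a.1) : A × A) = (0, 0)
    refine Prod.ext ?_ ?_ <;> simp [mul_def, zero_def]
  mul_zero a := by
    show ((a.1 * 0 - star (0 : A) * a.2, 0 * a.1 + a.2 * star (0 : A)) : A × A) = (0, 0)
    refine Prod.ext ?_ ?_ <;> simp [mul_def, zero_def]
  one_mul a := by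
    show (((1 : A) * a.1 - star a.2 * 0, a.2 * 1 + 0 * star a.1) : A × A) = a
    refine Prod.ext ?_ ?_ <;> simp [mul_def, one_def]
  mul_one a := by
    show ((a.1 * 1 - star (0 : A) * a.2, 0 * a.1 + a.2 * star (1 : A)) : A × A) = a
    refine Prod.ext ?_ ?_ <;> simp [mul_def, one_def, StarOne.star_one]

instance instStarAddMonoid : StarAddMonoid (CD A) where
  star_involutive x := by
    show ((star (star x.1), -(-x.2)) : A × A) = x
    refine Prod.ext ?_ ?_ <;> simp
  star_add x y := by
    show ((star (x.1 + y.1), -(x.2 + y.2)) : A × A) = (star x.1 + star y.1, -x.2 + -y.2)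
    refine Prod.ext ?_ ?_ <;> simp [add_comm]

instance instStarOne : StarOne (CD A) :=
  ⟨Prod.ext (StarOne.star_one) (by show -(0 : A) = 0; simp)⟩

end

end CD

instance : CD.StarOne ℝ := ⟨by simp⟩

/-- The real octonions, as a three-fold Cayley–Dickson double of ℝ. -/
def Octonion : Type := CD (CD (CD ℝ))

instance : NonAssocRing Octonion := inferInstanceAs (NonAssocRing (CD (CD (CD ℝ))))
instance : StarAddMonoid Octonion := inferInstanceAs (StarAddMonoid (CD (CD (CD ℝ))))
instance : CD.StarOne Octonion := inferInstanceAs (CD.StarOne (CD (CD (CD ℝ))))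
noncomputable instance : Module ℝ Octonion := inferInstanceAs (Module ℝ (CD (CD (CD ℝ))))

/-- The real sedenions, as the Cayley–Dickson double of the octonions. -/
def Sedenion : Type := CD Octonion

instance : NonAssocRing Sedenion := inferInstanceAs (NonAssocRing (CD Octonion))
instance : StarAddMonoid Sedenion := inferInstanceAs (StarAddMonoid (CD Octonion))
instance : CD.StarOne Sedenion := inferInstanceAs (CD.StarOne (CD Octonion))
noncomputable instance : Module ℝ Sedenion := inferInstanceAs (Module ℝ (CD Octonion))

/-- Assemble a complex number, quaternion, octonion, sedenion from real coordinates. -/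
def mkC (f : ℕ → ℝ) (k : ℕ) : CD ℝ := CD.mk (f k) (f (k+1))
def mkH (f : ℕ → ℝ) (k : ℕ) : CD (CD ℝ) := CD.mk (mkC f k) (mkC f (k+2))
def mkO (f : ℕ → ℝ) (k : ℕ) : Octonion := CD.mk (mkH f k) (mkH f (k+4))
def mkS (f : ℕ → ℝ) : Sedenion := CD.mk (mkO f 0) (mkO f 8)

/-- The standard basis `e₀, …, e₁₅` of the sedenions. -/
def sE (n : ℕ) : Sedenion := mkS (fun k => if k = n then 1 else 0)

/-- The standard basis `e₀, …, e₇` of the octonions. -/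
def oE (n : ℕ) : Octonion := mkO (fun k => if k = n then 1 else 0) 0

/-- Powers in a (power-associative) non-associative algebra. -/
def cdpow {A : Type*} [One A] [Mul A] (x : A) : ℕ → A
  | 0 => 1
  | n+1 => cdpow x n * x

lemma CD.neg_def {A : Type*} [AddCommGroup A] (x : CD A) : -x = (-x.1, -x.2) := rfl
lemma CD.sub_def' {A : Type*} [AddCommGroup A] (x y : CD A) : x - y = (x.1 - y.1, x.2 - y.2) := rfl

lemma Oct.mul_def (x y : Octonion) :
    x * y = (x.1 * y.1 - star y.2 * x.2, y.2 * x.1 + x.2 * star y.1) := rfl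
lemma Oct.add_def (x y : Octonion) : x + y = (x.1 + y.1, x.2 + y.2) := rfl
lemma Oct.neg_def (x : Octonion) : -x = (-x.1, -x.2) := rfl
lemma Oct.sub_def (x y : Octonion) : x - y = (x.1 - y.1, x.2 - y.2) := rfl
lemma Oct.zero_def : (0 : Octonion) = ((0 : CD (CD ℝ)), 0) := rfl
lemma Oct.star_def (x : Octonion) : star x = (star x.1, -x.2) := rfl

lemma Sed.mul_def (x y : Sedenion) :
    x * y = (x.1 * y.1 - star y.2 * x.2, y.2 * x.1 + x.2 * star y.1) := rfl
lemma Sed.add_def (x y : Sedenion) : x + y = (x.1 + y.1, x.2 + y.2) := rfl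
lemma Sed.neg_def (x : Sedenion) : -x = (-x.1, -x.2) := rfl
lemma Sed.sub_def (x y : Sedenion) : x - y = (x.1 - y.1, x.2 - y.2) := rfl
lemma Sed.zero_def : (0 : Sedenion) = ((0 : Octonion), 0) := rfl
lemma Sed.star_def (x : Sedenion) : star x = (star x.1, -x.2) := rfl


lemma CD.eq_zero_iff {A : Type*} [NonAssocRing A] [StarAddMonoid A] [CD.StarOne A]
    (x : CD A) : x = 0 ↔ x.1 = 0 ∧ x.2 = 0 := by
  rw [CD.zero_def]; exact Prod.ext_iff
lemma Oct.eq_zero_iff (x : Octonion) : x = 0 ↔ x.1 = 0 ∧ x.2 = 0 := by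
  rw [Oct.zero_def]; exact Prod.ext_iff
lemma Sed.eq_zero_iff (x : Sedenion) : x = 0 ↔ x.1 = 0 ∧ x.2 = 0 := by
  rw [Sed.zero_def]; exact Prod.ext_iff

lemma CD.fst_add' {A : Type*} [NonAssocRing A] [StarAddMonoid A] [CD.StarOne A]
    (x y : CD A) : (x + y).1 = x.1 + y.1 := rfl
lemma CD.snd_add' {A : Type*} [NonAssocRing A] [StarAddMonoid A] [CD.StarOne A]
    (x y : CD A) : (x + y).2 = x.2 + y.2 := rfl
lemma CD.fst_neg' {A : Type*} [NonAssocRing A] [StarAddMonoid A] [CD.StarOne A]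
    (x : CD A) : (-x).1 = -x.1 := rfl
lemma CD.snd_neg' {A : Type*} [NonAssocRing A] [StarAddMonoid A] [CD.StarOne A]
    (x : CD A) : (-x).2 = -x.2 := rfl
lemma CD.fst_sub' {A : Type*} [NonAssocRing A] [StarAddMonoid A] [CD.StarOne A]
    (x y : CD A) : (x - y).1 = x.1 - y.1 := rfl
lemma CD.snd_sub' {A : Type*} [NonAssocRing A] [StarAddMonoid A] [CD.StarOne A]
    (x y : CD A) : (x - y).2 = x.2 - y.2 := rfl

lemma sE_fst (n : ℕ) : (sE n).1 = mkO (fun k => if k = n then 1 else 0) 0 := rfl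
lemma sE_snd (n : ℕ) : (sE n).2 = mkO (fun k => if k = n then 1 else 0) 8 := rfl
lemma mkO_fst (f : ℕ → ℝ) (k : ℕ) : (mkO f k).1 = mkH f k := rfl
lemma mkO_snd (f : ℕ → ℝ) (k : ℕ) : (mkO f k).2 = mkH f (k+4) := rfl
lemma mkH_fst (f : ℕ → ℝ) (k : ℕ) : (mkH f k).1 = mkC f k := rfl
lemma mkH_snd (f : ℕ → ℝ) (k : ℕ) : (mkH f k).2 = mkC f (k+2) := rfl
lemma mkC_fst (f : ℕ → ℝ) (k : ℕ) : (mkC f k).1 = f k := rfl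
lemma mkC_snd (f : ℕ → ℝ) (k : ℕ) : (mkC f k).2 = f (k+1) := rfl

lemma Sed.fst_mul' (x y : Sedenion) : (x * y).1 = x.1 * y.1 - star y.2 * x.2 := rfl
lemma Sed.snd_mul' (x y : Sedenion) : (x * y).2 = y.2 * x.1 + x.2 * star y.1 := rfl
lemma Sed.fst_add' (x y : Sedenion) : (x + y).1 = x.1 + y.1 := rfl
lemma Sed.snd_add' (x y : Sedenion) : (x + y).2 = x.2 + y.2 := rfl
lemma Sed.fst_sub' (x y : Sedenion) : (x - y).1 = x.1 - y.1 := rfl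
lemma Sed.snd_sub' (x y : Sedenion) : (x - y).2 = x.2 - y.2 := rfl
lemma Sed.fst_neg' (x : Sedenion) : (-x).1 = -x.1 := rfl
lemma Sed.snd_neg' (x : Sedenion) : (-x).2 = -x.2 := rfl
lemma Sed.fst_zero' : (0 : Sedenion).1 = 0 := rfl
lemma Sed.snd_zero' : (0 : Sedenion).2 = 0 := rfl
lemma Sed.fst_star' (x : Sedenion) : (star x).1 = star x.1 := rfl
lemma Sed.snd_star' (x : Sedenion) : (star x).2 = -x.2 := rfl
lemma Sed.ext_iff' (x y : Sedenion) : x = y ↔ x.1 = y.1 ∧ x.2 = y.2 := Prod.ext_iff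
lemma Oct.fst_mul' (x y : Octonion) : (x * y).1 = x.1 * y.1 - star y.2 * x.2 := rfl
lemma Oct.snd_mul' (x y : Octonion) : (x * y).2 = y.2 * x.1 + x.2 * star y.1 := rfl
lemma Oct.fst_add' (x y : Octonion) : (x + y).1 = x.1 + y.1 := rfl
lemma Oct.snd_add' (x y : Octonion) : (x + y).2 = x.2 + y.2 := rfl
lemma Oct.fst_sub' (x y : Octonion) : (x - y).1 = x.1 - y.1 := rfl
lemma Oct.snd_sub' (x y : Octonion) : (x - y).2 = x.2 - y.2 := rfl
lemma Oct.fst_neg' (x : Octonion) : (-x).1 = -x.1 := rfl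
lemma Oct.snd_neg' (x : Octonion) : (-x).2 = -x.2 := rfl
lemma Oct.fst_zero' : (0 : Octonion).1 = 0 := rfl
lemma Oct.snd_zero' : (0 : Octonion).2 = 0 := rfl
lemma Oct.fst_star' (x : Octonion) : (star x).1 = star x.1 := rfl
lemma Oct.snd_star' (x : Octonion) : (star x).2 = -x.2 := rfl
lemma Oct.ext_iff' (x y : Octonion) : x = y ↔ x.1 = y.1 ∧ x.2 = y.2 := Prod.ext_iff
lemma CD.fst_mul' {A : Type*} [NonAssocRing A] [StarAddMonoid A] [CD.StarOne A] (x y : CD A) : (x * y).1 = x.1 * y.1 - star y.2 * x.2 := rfl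
lemma CD.snd_mul' {A : Type*} [NonAssocRing A] [StarAddMonoid A] [CD.StarOne A] (x y : CD A) : (x * y).2 = y.2 * x.1 + x.2 * star y.1 := rfl
lemma CD.fst_zero' {A : Type*} [NonAssocRing A] [StarAddMonoid A] [CD.StarOne A] : (0 : CD A).1 = 0 := rfl
lemma CD.snd_zero' {A : Type*} [NonAssocRing A] [StarAddMonoid A] [CD.StarOne A] : (0 : CD A).2 = 0 := rfl
lemma CD.fst_star' {A : Type*} [NonAssocRing A] [StarAddMonoid A] [CD.StarOne A] (x : CD A) : (star x).1 = star x.1 := rfl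
lemma CD.snd_star' {A : Type*} [NonAssocRing A] [StarAddMonoid A] [CD.StarOne A] (x : CD A) : (star x).2 = -x.2 := rfl
lemma CD.ext_iff' {A : Type*} [NonAssocRing A] [StarAddMonoid A] [CD.StarOne A] (x y : CD A) : x = y ↔ x.1 = y.1 ∧ x.2 = y.2 := Prod.ext_iff

set_option maxHeartbeats 2000000 in
/-- In the sedenions, with `α = e₁ + e₁₀` and `β = e₇ + e₁₂`, the
polynomial `f(x) = β x² + β x` decomposes as `(β x + β)(x - α)` — coefficientwise the
product `(β x + β)(x - α)` has coefficients `-(βα) = 0`, `β - βα = β`, `β` matching those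
of `f` — and yet `f(α) = β α² + β α = -2β ≠ 0`, so `α` is not a root of `f`. -/
theorem stmt4 :
    (-(  (sE 7 + sE 12) * (sE 1 + sE 10)) = 0 ∧
      (sE 7 + sE 12) - (sE 7 + sE 12) * (sE 1 + sE 10) = sE 7 + sE 12) ∧
    (sE 7 + sE 12) * cdpow (sE 1 + sE 10) 2 + (sE 7 + sE 12) * (sE 1 + sE 10)
      = -(2 : Sedenion) * (sE 7 + sE 12) ∧
    (sE 7 + sE 12) * cdpow (sE 1 + sE 10) 2 + (sE 7 + sE 12) * (sE 1 + sE 10) ≠ 0 := by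
  have h2 : (-(2 : Sedenion)) * ((sE 7 + sE 12)) = -((sE 7 + sE 12) + (sE 7 + sE 12)) := by
    rw [neg_mul, two_mul]
  rw [h2]
  refine ⟨⟨?_, ?_⟩, ?_, ?_⟩ <;>
  · simp [cdpow, sE_fst, sE_snd, mkO_fst, mkO_snd, mkH_fst, mkH_snd, mkC_fst, mkC_snd,
      Sed.fst_mul', Sed.snd_mul', Sed.fst_add', Sed.snd_add', Sed.fst_sub', Sed.snd_sub', Sed.fst_neg', Sed.snd_neg', Sed.fst_zero', Sed.snd_zero', Sed.fst_star', Sed.snd_star',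
      Sed.ext_iff', Oct.fst_mul', Oct.snd_mul', Oct.fst_add', Oct.snd_add', Oct.fst_sub', Oct.snd_sub', Oct.fst_neg', Oct.snd_neg', Oct.fst_zero', Oct.snd_zero', Oct.fst_star',
      Oct.snd_star', Oct.ext_iff', CD.fst_mul', CD.snd_mul', CD.fst_zero', CD.snd_zero', CD.fst_star', CD.snd_star', CD.ext_iff',
      CD.fst_add', CD.snd_add', CD.fst_neg', CD.snd_neg', CD.fst_sub', CD.snd_sub'] <;>
    norm_num [Prod.ext_iff, Prod.mk_eq_zero, Sed.eq_zero_iff, Oct.eq_zero_iff, CD.eq_zero_iff]
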